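/- Let a and b be real numbers and for integers n ≥ 3 define v_n(a,b) = (∑_{k=1}^{n−2} 1/k) + (a·n+b)/(n(n−1)) − ln n. If a ≠ 3/2, then lim_{n→∞} n·(v_n(a,b) − γ) = a − 3/2, which is nonzero; in particular (v_n(a,b))_{n≥3} converges to γ with rate of convergence exactly n^{−1}. -/

import Mathlib

set_option maxHeartbeats 1000000

open Filter Topology
section Aux
open Real

-- midpoint bound: log(1+x) ≥ 2x/(x+2)
lemma logB {x : ℝ} (hx : 0 ≤ x) : 2*x/(x+2) ≤ Real.log (1+x) := by
  set f : ℝ → ℝ := fun y => Real.log (1+y) - 2*y/(y+2) with hf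
  have hderiv : ∀ y : ℝ, 0 ≤ y → HasDerivAt f (1/(1+y) - 4/(y+2)^2) y := by
    intro y hy
    have h1 : HasDerivAt (fun z : ℝ => Real.log (1+z)) (1/(1+y)) y := by
      have := ((hasDerivAt_id' (x:=y)).const_add 1).log (by linarith)
      simpa using this
    have h2 : HasDerivAt (fun z : ℝ => 2*z/(z+2)) (4/(y+2)^2) y := by
      have hnum : HasDerivAt (fun z : ℝ => 2*z) 2 y := by simpa using (hasDerivAt_id' (x:=y)).const_mul 2
      have hden : HasDerivAt (fun z : ℝ => z+2) 1 y := (hasDerivAt_id' (x:=y)).add_const 2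
      have := hnum.div hden (by linarith)
      simp only [Pi.div_def] at this
      refine this.congr_deriv ?_
      rw [div_eq_div_iff (pow_pos (by linarith : (0:ℝ) < y+2) 2).ne' (pow_pos (by linarith : (0:ℝ) < y+2) 2).ne']
      ring
    exact h1.sub h2
  have hmono : MonotoneOn f (Set.Ici (0:ℝ)) := by
    apply monotoneOn_of_deriv_nonneg (convex_Ici 0)
    · intro y hy
      exact ((hderiv y hy).continuousAt).continuousWithinAt
    · intro y hy
      rw [interior_Ici, Set.mem_Ioi] at hy
      exact ((hderiv y hy.le).differentiableAt).differentiableWithinAt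
    · intro y hy
      rw [interior_Ici, Set.mem_Ioi] at hy
      rw [(hderiv y hy.le).deriv]
      have h1 : (0:ℝ) < 1 + y := by linarith
      have h2 : (0:ℝ) < (y+2)^2 := by positivity
      rw [sub_nonneg, div_le_div_iff₀ h2 h1]
      nlinarith [sq_nonneg y]
  have := hmono (Set.self_mem_Ici) (hx : x ∈ Set.Ici 0) hx
  simp only [hf] at this
  simp at this
  linarith [this]

-- trapezoid bound: log(1+x) ≤ x(x+2)/(2(x+1))
lemma logA {x : ℝ} (hx : 0 ≤ x) : Real.log (1+x) ≤ x*(x+2)/(2*(x+1)) := by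
  set f : ℝ → ℝ := fun y => y*(y+2)/(2*(y+1)) - Real.log (1+y) with hf
  have hderiv : ∀ y : ℝ, 0 ≤ y → HasDerivAt f ((y^2+2*y+2)/(2*(y+1)^2) - 1/(1+y)) y := by
    intro y hy
    have h1 : HasDerivAt (fun z : ℝ => Real.log (1+z)) (1/(1+y)) y := by
      have := ((hasDerivAt_id' (x:=y)).const_add 1).log (by linarith)
      simpa using this
    have h2 : HasDerivAt (fun z : ℝ => z*(z+2)/(2*(z+1))) ((y^2+2*y+2)/(2*(y+1)^2)) y := by
      have hnum : HasDerivAt (fun z : ℝ => z*(z+2)) (1*(y+2) + y*1) y :=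
        (hasDerivAt_id' (x:=y)).mul ((hasDerivAt_id' (x:=y)).add_const 2)
      have hden : HasDerivAt (fun z : ℝ => 2*(z+1)) 2 y := by
        simpa using ((hasDerivAt_id' (x:=y)).add_const 1).const_mul 2
      have := hnum.div hden (by linarith)
      simp only [Pi.div_def] at this
      refine this.congr_deriv ?_
      have : (0:ℝ) < y + 1 := by linarith
      rw [div_eq_div_iff (pow_pos (mul_pos two_pos this) 2).ne' (mul_pos two_pos (pow_pos this 2)).ne']
      ring
    exact h2.sub h1
  have hmono : MonotoneOn f (Set.Ici (0:ℝ)) := by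
    apply monotoneOn_of_deriv_nonneg (convex_Ici 0)
    · intro y hy
      exact ((hderiv y hy).continuousAt).continuousWithinAt
    · intro y hy
      rw [interior_Ici, Set.mem_Ioi] at hy
      exact ((hderiv y hy.le).differentiableAt).differentiableWithinAt
    · intro y hy
      rw [interior_Ici, Set.mem_Ioi] at hy
      rw [(hderiv y hy.le).deriv]
      have h1 : (0:ℝ) < 1 + y := by linarith
      have h2 : (0:ℝ) < 2*(y+1)^2 := by positivity
      rw [sub_nonneg, div_le_div_iff₀ h1 h2]
      nlinarith [sq_nonneg y, hy.le]
  have := hmono (Set.self_mem_Ici) (hx : x ∈ Set.Ici 0) hx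
  simp only [hf] at this
  simp at this
  linarith [this]

noncomputable def dd (n : ℕ) : ℝ := harmonic n - Real.log n

lemma dd_succ {n : ℕ} (hn : 1 ≤ n) :
    dd (n+1) = dd n + 1/((n:ℝ)+1) - Real.log (1 + 1/(n:ℝ)) := by
  have hn0 : (0:ℝ) < n := by exact_mod_cast hn
  unfold dd
  rw [harmonic_succ]
  have hlog : Real.log ((n:ℝ)+1) = Real.log n + Real.log (1 + 1/(n:ℝ)) := by
    rw [← Real.log_mul hn0.ne' (by positivity)]
    congr 1
    field_simp
  push_cast
  rw [hlog]
  ring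

lemma dd_sub_le {n : ℕ} (hn : 1 ≤ n) :
    dd n - Real.eulerMascheroniConstant ≤ 1/(2*(n:ℝ)) := by
  set e : ℕ → ℝ := fun m => dd m - 1/(2*(m:ℝ)) with he
  have step : ∀ m : ℕ, 1 ≤ m → e m ≤ e (m+1) := by
    intro m hm
    have hm0 : (0:ℝ) < m := by exact_mod_cast hm
    have hA := logA (x := 1/(m:ℝ)) (by positivity)
    have harith : (1/(m:ℝ))*((1/(m:ℝ))+2)/(2*((1/(m:ℝ))+1)) = 1/(2*(m:ℝ)) - 1/(2*((m:ℝ)+1)) + 1/((m:ℝ)+1) := by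
      field_simp
      ring
    rw [harith] at hA
    simp only [he, dd_succ hm]
    push_cast
    linarith
  have chain : ∀ m, n ≤ m → e n ≤ e m := by
    intro m hm
    induction m, hm using Nat.le_induction with
    | base => exact le_refl _
    | succ m hnm ih => exact ih.trans (step m (hn.trans hnm))
  have hlim : Tendsto e atTop (𝓝 Real.eulerMascheroniConstant) := by
    have h1 : Tendsto (fun m : ℕ => 1/(2*(m:ℝ))) atTop (𝓝 0) := by
      simp only [one_div]
      exact (tendsto_natCast_atTop_atTop.const_mul_atTop two_pos).inv_tendsto_atTop
    have h2 := Real.tendsto_harmonic_sub_log.sub h1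
    rw [sub_zero] at h2
    exact h2
  have := ge_of_tendsto hlim (eventually_atTop.2 ⟨n, chain⟩)
  simp only [he] at this
  linarith

lemma le_dd_sub {n : ℕ} (hn : 1 ≤ n) :
    1/(2*((n:ℝ)+1)) ≤ dd n - Real.eulerMascheroniConstant := by
  set e : ℕ → ℝ := fun m => dd m - 1/(2*((m:ℝ)+1)) with he
  have step : ∀ m : ℕ, 1 ≤ m → e (m+1) ≤ e m := by
    intro m hm
    have hm0 : (0:ℝ) < m := by exact_mod_cast hm
    have hB := logB (x := 1/(m:ℝ)) (by positivity)
    have harith : 2*(1/(m:ℝ))/((1/(m:ℝ))+2) = 2/(2*(m:ℝ)+1) := by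
      field_simp
      ring
    rw [harith] at hB
    have hkey : 1/(2*((m:ℝ)+1)) - 1/(2*((m:ℝ)+1+1)) + 1/((m:ℝ)+1) ≤ 2/(2*(m:ℝ)+1) := by
      have e1 : 1/(2*((m:ℝ)+1)) - 1/(2*((m:ℝ)+1+1)) + 1/((m:ℝ)+1) = (2*(m:ℝ)+5)/(2*((m:ℝ)+1)*((m:ℝ)+2)) := by
        field_simp
        ring
      rw [e1, div_le_div_iff₀ (by positivity) (by positivity)]
      nlinarith [hm0]
    simp only [he, dd_succ hm]
    push_cast
    linarith
  have chain : ∀ m, n ≤ m → e m ≤ e n := by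
    intro m hm
    induction m, hm using Nat.le_induction with
    | base => exact le_refl _
    | succ m hnm ih => exact (step m (hn.trans hnm)).trans ih
  have hlim : Tendsto e atTop (𝓝 Real.eulerMascheroniConstant) := by
    have h1 : Tendsto (fun m : ℕ => 1/(2*((m:ℝ)+1))) atTop (𝓝 0) := by
      simp only [one_div]
      exact ((tendsto_natCast_atTop_atTop.atTop_add tendsto_const_nhds).const_mul_atTop two_pos).inv_tendsto_atTop
    have h2 := Real.tendsto_harmonic_sub_log.sub h1
    rw [sub_zero] at h2
    exact h2
  have := le_of_tendsto hlim (eventually_atTop.2 ⟨n, chain⟩)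
  simp only [he] at this
  linarith

lemma key_half : Tendsto (fun n : ℕ => (n:ℝ) * (dd n - Real.eulerMascheroniConstant)) atTop (𝓝 (1/2)) := by
  apply tendsto_of_tendsto_of_tendsto_of_le_of_le'
    (g := fun n : ℕ => 1/2 - 1/(2*((n:ℝ)+1))) (h := fun _ : ℕ => (1:ℝ)/2)
  · have h1 : Tendsto (fun m : ℕ => 1/(2*((m:ℝ)+1))) atTop (𝓝 0) := by
      simp only [one_div]
      exact ((tendsto_natCast_atTop_atTop.atTop_add tendsto_const_nhds).const_mul_atTop two_pos).inv_tendsto_atTop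
    have h2 : Tendsto (fun n : ℕ => 1/2 - 1/(2*((n:ℝ)+1))) atTop (𝓝 (1/2 - 0)) :=
      tendsto_const_nhds.sub h1
    rw [sub_zero] at h2
    exact h2
  · exact tendsto_const_nhds
  · filter_upwards [eventually_ge_atTop 1] with n hn
    have hn0 : (0:ℝ) < n := by exact_mod_cast hn
    have := le_dd_sub hn
    have h2 : 1/2 - 1/(2*((n:ℝ)+1)) = (n:ℝ) * (1/(2*((n:ℝ)+1))) := by
      field_simp
      ring
    rw [h2]
    exact mul_le_mul_of_nonneg_left this hn0.le
  · filter_upwards [eventually_ge_atTop 1] with n hn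
    have hn0 : (0:ℝ) < n := by exact_mod_cast hn
    have := dd_sub_le hn
    calc (n:ℝ) * (dd n - Real.eulerMascheroniConstant) ≤ (n:ℝ) * (1/(2*(n:ℝ))) :=
          mul_le_mul_of_nonneg_left this hn0.le
      _ = 1/2 := by
          rw [mul_one_div, div_eq_div_iff (by positivity) (by norm_num)]
          ring

end Aux

noncomputable def v (a b : ℝ) (n : ℕ) : ℝ :=
  (∑ k ∈ Finset.Icc 1 (n - 2), (1 : ℝ) / k) + (a * n + b) / ((n : ℝ) * ((n : ℝ) - 1))
    - Real.log n

theorem rate_one (a b : ℝ) (ha : a ≠ 3 / 2) :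
    Tendsto (fun n : ℕ => (n : ℝ) * (v a b n - Real.eulerMascheroniConstant)) atTop
      (𝓝 (a - 3 / 2)) ∧ a - 3 / 2 ≠ 0 := by
  refine ⟨?_, sub_ne_zero.mpr ha⟩
  have hr : Tendsto (fun n : ℕ => a - 2 + (a + b - 1)/((n:ℝ)-1)) atTop (𝓝 (a-2)) := by
    have h1 : Tendsto (fun n : ℕ => ((n:ℝ)-1)) atTop atTop := by
      simpa [sub_eq_add_neg] using
        tendsto_atTop_add_const_right atTop (-1 : ℝ) tendsto_natCast_atTop_atTop
    have h2 : Tendsto (fun n : ℕ => ((n:ℝ)-1)⁻¹) atTop (𝓝 0) := h1.inv_tendsto_atTop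
    have h3 := h2.const_mul (a+b-1)
    rw [mul_zero] at h3
    have h4 := (tendsto_const_nhds (x := a-2) (f := (atTop : Filter ℕ))).add h3
    rw [add_zero] at h4
    exact h4.congr (fun n => by rw [div_eq_mul_inv])
  have hmain := key_half.add hr
  have heq : ∀ᶠ n : ℕ in atTop, (n:ℝ)*(dd n - Real.eulerMascheroniConstant) + (a - 2 + (a+b-1)/((n:ℝ)-1))
      = (n:ℝ)*(v a b n - Real.eulerMascheroniConstant) := by
    filter_upwards [eventually_ge_atTop 3] with n hn
    obtain ⟨m, rfl⟩ : ∃ m, n = m + 3 := ⟨n - 3, by omega⟩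
    have hsub : m + 3 - 2 = m + 1 := by omega
    have hsum : (∑ k ∈ Finset.Icc 1 (m+1), (1:ℝ)/k) = ((harmonic (m+1) : ℚ) : ℝ) := by
      rw [harmonic_eq_sum_Icc]
      push_cast
      simp [one_div]
    have hharm : ((harmonic (m+3) : ℚ) : ℝ)
        = ((harmonic (m+1) : ℚ) : ℝ) + ((m:ℝ)+2)⁻¹ + ((m:ℝ)+3)⁻¹ := by
      have e1 : m + 3 = (m + 2) + 1 := by omega
      have e2 : m + 2 = (m + 1) + 1 := by omega
      rw [e1, harmonic_succ, e2, harmonic_succ]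
      push_cast
      ring
    have hm2 : ((m:ℝ)+2) ≠ 0 := by positivity
    have hm3 : ((m:ℝ)+3) ≠ 0 := by positivity
    simp only [v, dd, hsub]
    rw [hsum, hharm]
    push_cast
    rw [show ((m:ℝ)+3)-1 = (m:ℝ)+2 from by ring]
    field_simp
    ring
  have h5 := hmain.congr' heq
  have e : (1:ℝ)/2 + (a-2) = a - 3/2 := by ring
  rw [e] at h5
  exact h5
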